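/- Let A be the n×n tridiagonal discrete Laplacian (diagonal (1,2,...,2,1), off-diagonals −1) and S := (A + (1/n²)I_n)^{-1}. Then the entries of the last column of S are monotonically nondecreasing: S_{1,n} ≤ S_{2,n} ≤ ⋯ ≤ S_{n,n}. In particular S_{1,n} ≤ S_{i,n} ≤ S_{n,n} for all 1 ≤ i ≤ n. -/
import Mathlib


/-- The tridiagonal 1-D discrete Laplacian with diagonal (1,2,...,2,1) and off-diagonals -1. -/
def lap (n : ℕ) : Matrix (Fin n) (Fin n) ℝ :=
  Matrix.of fun i j =>
    if i = j then (if (i : ℕ) = 0 ∨ (i : ℕ) = n - 1 then 1 else 2)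
    else if (i : ℕ) + 1 = (j : ℕ) ∨ (j : ℕ) + 1 = (i : ℕ) then -1 else 0

/-- `S = (A + (1/n²) I)⁻¹`. -/
noncomputable def Smat (n : ℕ) : Matrix (Fin n) (Fin n) ℝ :=
  (lap n + ((1 : ℝ) / (n : ℝ)^2) • (1 : Matrix (Fin n) (Fin n) ℝ))⁻¹

private lemma diff_sum (n : ℕ) (ε : ℝ) (u : ℕ → ℝ)
    (h0 : u 1 - u 0 = ε * u 0)
    (hrec : ∀ m, 0 < m → m + 1 < n → u (m+1) = (2+ε) * u m - u (m-1)) :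
    ∀ m, m + 1 < n → u (m+1) - u m = ε * ∑ j ∈ Finset.range (m+1), u j := by
  intro m
  induction m with
  | zero => intro _; simpa using h0
  | succ k ih =>
    intro h
    have hk : k + 1 < n := by omega
    have hr := hrec (k+1) (by omega) h
    simp only [Nat.add_sub_cancel] at hr
    have ihk := ih hk
    rw [Finset.sum_range_succ]
    linear_combination hr + ihk

private lemma pos_all (n : ℕ) (ε : ℝ) (hε : 0 < ε) (u : ℕ → ℝ)
    (hd : ∀ m, m + 1 < n → u (m+1) - u m = ε * ∑ j ∈ Finset.range (m+1), u j)
    (h0 : 0 < u 0) :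
    ∀ m, m < n → 0 < u m ∧ 0 < ∑ j ∈ Finset.range (m+1), u j := by
  intro m
  induction m with
  | zero => intro _; constructor <;> simpa using h0
  | succ k ih =>
    intro h
    obtain ⟨hu, hs⟩ := ih (by omega)
    have hd' := hd k (by omega)
    have hpos : 0 < u (k+1) := by nlinarith
    refine ⟨hpos, ?_⟩
    rw [Finset.sum_range_succ]
    linarith

private lemma zero_all (n : ℕ) (ε : ℝ) (u : ℕ → ℝ)
    (hd : ∀ m, m + 1 < n → u (m+1) - u m = ε * ∑ j ∈ Finset.range (m+1), u j)
    (h0 : u 0 = 0) :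
    ∀ m, m < n → u m = 0 ∧ ∑ j ∈ Finset.range (m+1), u j = 0 := by
  intro m
  induction m with
  | zero => intro _; constructor <;> simpa using h0
  | succ k ih =>
    intro h
    obtain ⟨hu, hs⟩ := ih (by omega)
    have hd' := hd k (by omega)
    rw [hs, mul_zero] at hd'
    have : u (k+1) = 0 := by linarith
    refine ⟨this, ?_⟩
    rw [Finset.sum_range_succ, hs, this, add_zero]

private lemma rowsum (n : ℕ) (ε : ℝ) (x : Fin n → ℝ) (i : Fin n) :
    ((lap n + ε • (1 : Matrix (Fin n) (Fin n) ℝ)).mulVec x) i =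
      ((if (i:ℕ) = 0 ∨ (i:ℕ) = n - 1 then (1:ℝ) else 2) + ε) * x i
      - (if h : (i:ℕ)+1 < n then x ⟨(i:ℕ)+1, h⟩ else 0)
      - (if h : 0 < (i:ℕ) then x ⟨(i:ℕ)-1, by omega⟩ else 0) := by
  set c : ℝ := (if (i:ℕ) = 0 ∨ (i:ℕ) = n - 1 then (1:ℝ) else 2) + ε with hc
  have key : ∀ k : Fin n, (lap n + ε • (1 : Matrix (Fin n) (Fin n) ℝ)) i k * x k =
      (if k = i then c * x k else 0)
      + (if (i:ℕ) + 1 = (k:ℕ) then -(x k) else 0)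
      + (if (k:ℕ) + 1 = (i:ℕ) then -(x k) else 0) := by
    intro k
    simp only [hc, Matrix.add_apply, Matrix.smul_apply, Matrix.one_apply, lap, Matrix.of_apply,
      Fin.ext_iff, smul_eq_mul]
    split_ifs <;> first | omega | ring
  have s1 : ∑ k : Fin n, (if k = i then c * x k else 0) = c * x i := by
    rw [Finset.sum_ite_eq' Finset.univ i fun k => c * x k]; simp
  have s2 : ∑ k : Fin n, (if (i:ℕ) + 1 = (k:ℕ) then -(x k) else 0)
      = -(if h : (i:ℕ)+1 < n then x ⟨(i:ℕ)+1, h⟩ else 0) := by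
    by_cases h : (i:ℕ) + 1 < n
    · rw [dif_pos h]
      have hiff : ∀ k : Fin n, ((i:ℕ) + 1 = (k:ℕ)) ↔ k = ⟨(i:ℕ)+1, h⟩ := by
        intro k; rw [Fin.ext_iff]; exact ⟨fun h => h.symm, fun h => h.symm⟩
      rw [Finset.sum_congr rfl fun k _ => by rw [if_congr (hiff k) rfl rfl]]
      rw [Finset.sum_ite_eq' Finset.univ _ fun k => -(x k)]
      simp
    · rw [dif_neg h, neg_zero]
      refine Finset.sum_eq_zero fun k _ => ?_
      rw [if_neg]; omega
  have s3 : ∑ k : Fin n, (if (k:ℕ) + 1 = (i:ℕ) then -(x k) else 0)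
      = -(if h : 0 < (i:ℕ) then x ⟨(i:ℕ)-1, by omega⟩ else 0) := by
    by_cases h : 0 < (i:ℕ)
    · rw [dif_pos h]
      have hiff : ∀ k : Fin n, ((k:ℕ) + 1 = (i:ℕ)) ↔ k = ⟨(i:ℕ)-1, by omega⟩ := by
        intro k; rw [Fin.ext_iff]; simp; omega
      rw [Finset.sum_congr rfl fun k _ => by rw [if_congr (hiff k) rfl rfl]]
      rw [Finset.sum_ite_eq' Finset.univ _ fun k => -(x k)]
      simp
    · rw [dif_neg h, neg_zero]
      refine Finset.sum_eq_zero fun k _ => ?_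
      rw [if_neg]; omega
  unfold Matrix.mulVec dotProduct
  rw [Finset.sum_congr rfl fun k _ => key k, Finset.sum_add_distrib, Finset.sum_add_distrib,
    s1, s2, s3]
  ring

/-- the sequence of entries of a vector, extended by `0`. -/
private def useq (n : ℕ) (x : Fin n → ℝ) : ℕ → ℝ := fun m => if h : m < n then x ⟨m, h⟩ else 0

private lemma useq_lt (n : ℕ) (x : Fin n → ℝ) (m : ℕ) (h : m < n) :
    useq n x m = x ⟨m, h⟩ := dif_pos h

private lemma key (n : ℕ) (hn : 2 ≤ n) (ε : ℝ) (x : Fin n → ℝ) (c : ℝ)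
    (hEq : ∀ i : Fin n, (lap n + ε • (1 : Matrix (Fin n) (Fin n) ℝ)).mulVec x i
      = if (i:ℕ) = n - 1 then c else 0) :
    (∀ m, m + 1 < n → useq n x (m+1) - useq n x m
        = ε * ∑ j ∈ Finset.range (m+1), useq n x j)
    ∧ ε * ∑ j ∈ Finset.range n, useq n x j = c := by
  obtain ⟨p, rfl⟩ : ∃ p, n = p + 2 := ⟨n - 2, by omega⟩
  have h0 : useq (p+2) x 1 - useq (p+2) x 0 = ε * useq (p+2) x 0 := by
    have heq := hEq ⟨0, by omega⟩
    rw [rowsum] at heq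
    simp only [Fin.val_mk, true_or, if_true, Nat.add_sub_cancel] at heq
    simp only [show p+2-1 = p+1 from rfl] at heq
    rw [if_neg (show ¬(0:ℕ) = p+1 by omega), dif_pos (show (0:ℕ)+1 < p+2 by omega),
      dif_neg (lt_irrefl 0)] at heq
    rw [show (⟨(0:ℕ)+1, by omega⟩ : Fin (p+2)) = ⟨1, by omega⟩ from rfl] at heq
    rw [← useq_lt (p+2) x 1 (by omega), ← useq_lt (p+2) x 0 (by omega)] at heq
    linarith
  have hrec : ∀ m, 0 < m → m + 1 < p + 2 →
      useq (p+2) x (m+1) = (2+ε) * useq (p+2) x m - useq (p+2) x (m-1) := by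
    intro m hm hmn
    have heq := hEq ⟨m, by omega⟩
    rw [rowsum] at heq
    simp only [Fin.val_mk, Nat.add_sub_cancel] at heq
    simp only [show p+2-1 = p+1 from rfl] at heq
    rw [if_neg (show ¬(m = 0 ∨ m = p+1) by omega), dif_pos (show m+1 < p+2 from hmn),
      dif_pos hm, if_neg (show ¬m = p+1 by omega)] at heq
    rw [← useq_lt (p+2) x (m+1) (by omega), ← useq_lt (p+2) x m (by omega),
      ← useq_lt (p+2) x (m-1) (by omega)] at heq
    linarith
  have hd := diff_sum (p+2) ε (useq (p+2) x) h0 hrec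
  refine ⟨hd, ?_⟩
  have hlast : (1+ε) * useq (p+2) x (p+1) - useq (p+2) x p = c := by
    have heq := hEq ⟨p+1, by omega⟩
    rw [rowsum] at heq
    simp only [Fin.val_mk, Nat.add_sub_cancel, or_true, if_true] at heq
    simp only [show p+2-1 = p+1 from rfl, or_true, if_true] at heq
    rw [dif_neg (show ¬(p+1+1 < p+2) by omega), dif_pos (show 0 < p+1 by omega)] at heq
    rw [← useq_lt (p+2) x (p+1) (by omega), ← useq_lt (p+2) x p (by omega)] at heq
    linarith
  have hdp := hd p (by omega)
  show ε * ∑ j ∈ Finset.range ((p+1)+1), useq (p+2) x j = c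
  rw [Finset.sum_range_succ]
  linear_combination hlast - hdp

private lemma mono_of_diff (n : ℕ) (u : ℕ → ℝ)
    (h : ∀ m, m + 1 < n → u m ≤ u (m+1)) :
    ∀ a b, b < n → a ≤ b → u a ≤ u b := by
  intro a b
  induction b with
  | zero => intro _ hab; rw [Nat.le_zero.mp hab]
  | succ k ih =>
    intro hb hab
    rcases Nat.lt_or_ge a (k+1) with hlt | hge
    · exact le_trans (ih (by omega) (by omega)) (h k hb)
    · have : a = k + 1 := by omega
      rw [this]

private lemma u0_pos (n : ℕ) (ε : ℝ) (hε : 0 < ε) (u : ℕ → ℝ) (c : ℝ) (hc : 0 < c)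
    (hd : ∀ m, m + 1 < n → u (m+1) - u m = ε * ∑ j ∈ Finset.range (m+1), u j)
    (htot : ε * ∑ j ∈ Finset.range n, u j = c) (hn : 1 ≤ n) :
    0 < u 0 := by
  rcases lt_trichotomy (u 0) 0 with h | h | h
  · exfalso
    have hd' : ∀ m, m + 1 < n → (fun m => -u m) (m+1) - (fun m => -u m) m
        = ε * ∑ j ∈ Finset.range (m+1), (fun m => -u m) j := by
      intro m hm
      have := hd m hm
      simp only [Finset.sum_neg_distrib]
      linarith
    have := (pos_all n ε hε (fun m => -u m) hd' (by simpa using h) (n-1) (by omega)).2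
    rw [show n - 1 + 1 = n by omega, Finset.sum_neg_distrib] at this
    nlinarith
  · exfalso
    have := (zero_all n ε u hd h (n-1) (by omega)).2
    rw [show n - 1 + 1 = n by omega] at this
    rw [this, mul_zero] at htot
    linarith
  · exact h

theorem Smat_last_column_monotone (n : ℕ) (hn : 1 ≤ n) :
    (∀ i j : Fin n, i ≤ j → Smat n i ⟨n - 1, by omega⟩ ≤ Smat n j ⟨n - 1, by omega⟩) ∧
    (∀ i : Fin n,
      Smat n ⟨0, by omega⟩ ⟨n - 1, by omega⟩ ≤ Smat n i ⟨n - 1, by omega⟩ ∧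
      Smat n i ⟨n - 1, by omega⟩ ≤ Smat n ⟨n - 1, by omega⟩ ⟨n - 1, by omega⟩) := by
  set ε : ℝ := (1 : ℝ) / (n : ℝ)^2 with hε
  have hεpos : 0 < ε := by
    rw [hε]
    have : (0:ℝ) < (n:ℝ) := by exact_mod_cast hn
    positivity
  set B : Matrix (Fin n) (Fin n) ℝ := lap n + ε • (1 : Matrix (Fin n) (Fin n) ℝ) with hB
  -- invertibility of B via kernel triviality
  have hdet : B.det ≠ 0 := by
    intro h
    obtain ⟨x, hx0, hx⟩ := (Matrix.exists_mulVec_eq_zero_iff).mpr h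
    rcases Nat.lt_or_ge n 2 with h2 | h2
    · -- n = 1
      have heq := congrFun hx ⟨0, by omega⟩
      rw [hB, rowsum] at heq
      rw [dif_neg (show ¬((⟨0, by omega⟩ : Fin n) : ℕ) + 1 < n by omega),
        dif_neg (show ¬0 < ((⟨0, by omega⟩ : Fin n) : ℕ) by exact lt_irrefl 0),
        if_pos (Or.inl (rfl : ((⟨0, by omega⟩ : Fin n) : ℕ) = 0))] at heq
      have hx00 : x ⟨0, by omega⟩ = 0 := by
        have hne : (1:ℝ) + ε ≠ 0 := by positivity
        have : (1 + ε) * x ⟨0, by omega⟩ = 0 := by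
          simpa using heq
        exact (mul_eq_zero.mp this).elim (fun hh => absurd hh hne) id
      apply hx0
      funext i
      have : i = ⟨0, by omega⟩ := by
        apply Fin.ext
        have := i.isLt
        omega
      rw [this, hx00]
      rfl
    · obtain ⟨hd, htot⟩ := key n h2 ε x 0 (by
        intro i
        rw [← hB, congrFun hx i]
        simp)
      have hu0 : useq n x 0 = 0 := by
        by_contra hne
        rcases lt_or_gt_of_ne hne with hlt | hgt
        · have hd' : ∀ m, m + 1 < n → (fun m => -useq n x m) (m+1) - (fun m => -useq n x m) m
              = ε * ∑ j ∈ Finset.range (m+1), (fun m => -useq n x m) j := by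
            intro m hm
            have h := hd m hm
            show -useq n x (m+1) - -useq n x m = ε * ∑ j ∈ Finset.range (m+1), -useq n x j
            rw [Finset.sum_neg_distrib]
            linarith
          have := (pos_all n ε hεpos (fun m => -useq n x m) hd'
            (by simpa using hlt) (n-1) (by omega)).2
          rw [show n - 1 + 1 = n by omega, Finset.sum_neg_distrib] at this
          nlinarith
        · have := (pos_all n ε hεpos _ hd hgt (n-1) (by omega)).2
          rw [show n - 1 + 1 = n by omega] at this
          nlinarith
      apply hx0
      funext i
      have := (zero_all n ε (useq n x) hd hu0 i.val i.isLt).1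
      rw [useq_lt n x i.val i.isLt] at this
      simpa using this
  have hmul : B * Smat n = 1 := by
    rw [show Smat n = B⁻¹ from rfl]
    exact Matrix.mul_nonsing_inv B (isUnit_iff_ne_zero.mpr hdet)
  set v : Fin n → ℝ := fun i => Smat n i ⟨n - 1, by omega⟩ with hv
  have hEq : ∀ i : Fin n, (lap n + ε • (1 : Matrix (Fin n) (Fin n) ℝ)).mulVec v i
      = if (i:ℕ) = n - 1 then 1 else 0 := by
    intro i
    have h1 : B.mulVec v i = (B * Smat n) i ⟨n - 1, by omega⟩ := by
      rw [Matrix.mul_apply]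
      rfl
    rw [← hB, h1, hmul, Matrix.one_apply]
    congr 1
    rw [Fin.ext_iff]
  rcases Nat.lt_or_ge n 2 with h2 | h2
  · -- n = 1 : all indices coincide
    have hall : ∀ i j : Fin n, i = j := by
      intro i j
      apply Fin.ext
      have := i.isLt
      have := j.isLt
      omega
    constructor
    · intro i j _
      rw [hall i j]
    · intro i
      constructor
      · rw [hall (⟨0, by omega⟩ : Fin n) i]
      · rw [hall i (⟨n-1, by omega⟩ : Fin n)]
  · obtain ⟨hd, htot⟩ := key n h2 ε v 1 hEq
    have hu0 : 0 < useq n v 0 := u0_pos n ε hεpos (useq n v) 1 one_pos hd htot (by omega)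
    have hpos := pos_all n ε hεpos (useq n v) hd hu0
    have hstep : ∀ m, m + 1 < n → useq n v m ≤ useq n v (m+1) := by
      intro m hm
      have ha := hd m hm
      have hb := (hpos m (by omega)).2
      nlinarith
    have hmono := mono_of_diff n (useq n v) hstep
    have main : ∀ i j : Fin n, i ≤ j →
        Smat n i ⟨n - 1, by omega⟩ ≤ Smat n j ⟨n - 1, by omega⟩ := by
      intro i j hij
      have := hmono i.val j.val j.isLt (Fin.le_def.mp hij)
      rwa [useq_lt n v i.val i.isLt, useq_lt n v j.val j.isLt] at this
    refine ⟨main, fun i => ⟨main ⟨0, by omega⟩ i (by rw [Fin.le_def]; exact Nat.zero_le _),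
      main i ⟨n-1, by omega⟩ (by rw [Fin.le_def]; have := i.isLt; simp; omega)⟩⟩
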